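/- Let R be a commutative ring that is a ℚ-algebra, H ⊆ R a ℚ-linear subspace, Q : H → ℚ a quadratic form with polar form B(x,y) = Q(x+y) − Q(x) − Q(y), and A : H → R a ℚ-linear map such that x³ = Q(x)·A(x) holds in R for every x ∈ H. Then for all d, l ∈ H with B(d,l) = 0, one has Q(l)·d³ = 3·Q(d)·(l²·d) in R. -/
import Mathlib


/-- Let `R` be a commutative `ℚ`-algebra, `H ⊆ R` a `ℚ`-linear subspace, `Q : H → ℚ` a
quadratic form with polar form `B(x,y) = Q(x+y) − Q(x) − Q(y)`, and `A : H → R` a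
`ℚ`-linear map such that `x³ = Q(x)·A(x)` in `R` for every `x ∈ H`. Then for all
`d, l ∈ H` with `B(d,l) = 0`, one has `Q(l)·d³ = 3·Q(d)·(l²·d)` in `R`. -/
theorem cube_relation_of_quadratic_relation
    {R : Type*} [CommRing R] [Algebra ℚ R]
    (H : Submodule ℚ R) (Q : QuadraticForm ℚ H) (A : H →ₗ[ℚ] R)
    (hQA : ∀ x : H, (x : R) ^ 3 = Q x • A x)
    (d l : H) (horth : QuadraticMap.polar (⇑Q) d l = 0) :
    Q l • ((d : R) ^ 3) = (3 * Q d) • (((l : R) ^ 2) * (d : R)) := by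
  have hd := hQA d
  have h1 := hQA (d + l)
  have h2 := hQA (d - l)
  have e1 : Q (d + l) = Q d + Q l := by
    have := QuadraticMap.map_add Q d l
    rw [horth] at this; linarith
  have e2 : Q (d - l) = Q d + Q l := by
    have h := QuadraticMap.map_add Q d (-l)
    rw [QuadraticMap.polar_neg_right, horth, QuadraticMap.map_neg] at h
    rw [sub_eq_add_neg]; linarith
  rw [e1] at h1
  rw [e2] at h2
  simp only [Submodule.coe_add, Submodule.coe_sub, map_add, map_sub,
    Algebra.smul_def, map_mul] at h1 h2 hd
  -- double the goal, then cancel 2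
  have h2ne : (2:ℚ) ≠ 0 := by norm_num
  apply smul_right_injective R h2ne
  simp only [smul_smul, Algebra.smul_def, map_mul]
  have a3 : algebraMap ℚ R 3 = 3 := map_ofNat _ 3
  have a2 : algebraMap ℚ R 2 = 2 := map_ofNat _ 2
  rw [a2, a3] at *
  linear_combination (2 * algebraMap ℚ R (Q l) + 2 * algebraMap ℚ R (Q d)) * hd
    - algebraMap ℚ R (Q d) * h1 - algebraMap ℚ R (Q d) * h2
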